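/- In the crystal graph on integer GT-arrays with border (a+b,a,0), every vertex is reachable by a directed path from the source (a,0,0); consequently the graph is connected. -/

import Mathlib

/-- Integer Gelfand–Tsetlin arrays `(x,y,z)` with border `(a+b, a, 0)`. -/
def GTM (a b : ℕ) : Set (ℤ × ℤ × ℤ) :=
  {t | 0 ≤ t.2.2 ∧ t.2.2 ≤ (a : ℤ) ∧ (a : ℤ) ≤ t.1 ∧ t.1 ≤ (a : ℤ) + b ∧
       t.2.2 ≤ t.2.1 ∧ t.2.1 ≤ t.1}

/-- Condition for the 1-edge raising the entry `z`. -/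
def zCond (a : ℕ) (u : ℤ × ℤ × ℤ) : Prop :=
  u.2.2 < (a : ℤ) ∧ u.2.2 < u.2.1 ∧ u.2.1 - u.2.2 > u.1 - (a : ℤ)

/-- 1-edges on GT-arrays: raise `z` if `zCond` holds, otherwise raise `x`. -/
def gtE1 (a b : ℕ) (u v : ℤ × ℤ × ℤ) : Prop :=
  u ∈ GTM a b ∧ v ∈ GTM a b ∧
    ((zCond a u ∧ v = (u.1, u.2.1, u.2.2 + 1)) ∨
     (¬ zCond a u ∧ u.1 < (a : ℤ) + b ∧ v = (u.1 + 1, u.2.1, u.2.2)))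

/-- 2-edges on GT-arrays: raise `y` when `y < x`. -/
def gtE2 (a b : ℕ) (u v : ℤ × ℤ × ℤ) : Prop :=
  u ∈ GTM a b ∧ v ∈ GTM a b ∧ u.2.1 < u.1 ∧ v = (u.1, u.2.1 + 1, u.2.2)

/-- Edges of either color. -/
def gtE (a b : ℕ) (u v : ℤ × ℤ × ℤ) : Prop := gtE1 a b u v ∨ gtE2 a b u v

private lemma reach_aux (a b : ℕ) (v : ℤ × ℤ × ℤ) (hv : v ∈ GTM a b) :
    ∃ (n : ℕ) (f : ℕ → ℤ × ℤ × ℤ),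
      f 0 = ((a : ℤ), 0, 0) ∧ f n = v ∧ ∀ k < n, gtE a b (f k) (f (k + 1)) := by
  obtain ⟨h1, h2, h3, h4, h5, h6⟩ := hv
  set X := v.1 with hX
  set Y := v.2.1 with hY
  set Z := v.2.2 with hZ
  set n1 : ℕ := Z.toNat with hn1def
  set n3 : ℕ := (X - a).toNat with hn3def
  set n4 : ℕ := (Y - Z).toNat with hn4def
  have hn1 : (n1 : ℤ) = Z := Int.toNat_of_nonneg h1
  have hn3 : (n3 : ℤ) = X - a := Int.toNat_of_nonneg (by omega)
  have hn4 : (n4 : ℤ) = Y - Z := Int.toNat_of_nonneg (by omega)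
  set f : ℕ → ℤ × ℤ × ℤ := fun k =>
    if k ≤ n1 then ((a : ℤ), (k : ℤ), 0)
    else if k ≤ n1 + n1 then ((a : ℤ), Z, ((k - n1 : ℕ) : ℤ))
    else if k ≤ n1 + n1 + n3 then ((a : ℤ) + ((k - n1 - n1 : ℕ) : ℤ), Z, Z)
    else (X, Z + ((k - n1 - n1 - n3 : ℕ) : ℤ), Z) with hf
  have e1 : ∀ k, k ≤ n1 → f k = ((a : ℤ), (k : ℤ), 0) := by
    intro k hk; simp only [hf]; rw [if_pos hk]
  have e2 : ∀ k, n1 ≤ k → k ≤ n1 + n1 → f k = ((a : ℤ), Z, ((k - n1 : ℕ) : ℤ)) := by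
    intro k h h'
    rcases eq_or_lt_of_le h with h0 | h0
    · rw [e1 k (le_of_eq h0.symm)]
      simp only [Prod.mk.injEq]
      refine ⟨?_, ?_, ?_⟩ <;> first | trivial | omega
    · simp only [hf]; rw [if_neg (by omega), if_pos h']
  have e3 : ∀ k, n1 + n1 ≤ k → k ≤ n1 + n1 + n3 →
      f k = ((a : ℤ) + ((k - n1 - n1 : ℕ) : ℤ), Z, Z) := by
    intro k h h'
    rcases eq_or_lt_of_le h with h0 | h0
    · rw [e2 k (by omega) (le_of_eq h0.symm)]
      simp only [Prod.mk.injEq]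
      refine ⟨?_, ?_, ?_⟩ <;> first | trivial | omega
    · simp only [hf]; rw [if_neg (by omega), if_neg (by omega), if_pos h']
  have e4 : ∀ k, n1 + n1 + n3 ≤ k →
      f k = (X, Z + ((k - n1 - n1 - n3 : ℕ) : ℤ), Z) := by
    intro k h
    rcases eq_or_lt_of_le h with h0 | h0
    · rw [e3 k (by omega) (le_of_eq h0.symm)]
      simp only [Prod.mk.injEq]
      refine ⟨?_, ?_, ?_⟩ <;> first | trivial | omega
    · simp only [hf]; rw [if_neg (by omega), if_neg (by omega), if_neg (by omega)]
  refine ⟨n1 + n1 + n3 + n4, f, ?_, ?_, ?_⟩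
  · rw [e1 0 (by omega)]; norm_num
  · rw [e4 _ (by omega)]
    have hveq : v = (X, Y, Z) := rfl
    rw [hveq]
    simp only [Prod.mk.injEq]
    refine ⟨?_, ?_, ?_⟩ <;> first | trivial | omega
  · intro k hk
    by_cases c1 : k < n1
    · rw [e1 k (by omega), e1 (k + 1) (by omega)]
      simp only [gtE, gtE1, gtE2, zCond, GTM, Set.mem_setOf_eq, Prod.mk.injEq, true_and, and_true]
      omega
    · by_cases c2 : k < n1 + n1
      · rw [e2 k (by omega) (by omega), e2 (k + 1) (by omega) (by omega)]
        simp only [gtE, gtE1, gtE2, zCond, GTM, Set.mem_setOf_eq, Prod.mk.injEq, true_and, and_true]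
        omega
      · by_cases c3 : k < n1 + n1 + n3
        · rw [e3 k (by omega) (by omega), e3 (k + 1) (by omega) (by omega)]
          simp only [gtE, gtE1, gtE2, zCond, GTM, Set.mem_setOf_eq, Prod.mk.injEq, true_and, and_true]
          omega
        · rw [e4 k (by omega), e4 (k + 1) (by omega)]
          simp only [gtE, gtE1, gtE2, zCond, GTM, Set.mem_setOf_eq, Prod.mk.injEq, true_and, and_true]
          omega

private lemma path_rtg (a b : ℕ) (r : ℤ × ℤ × ℤ → ℤ × ℤ × ℤ → Prop)
    (hr : ∀ x y, gtE a b x y → r x y) :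
    ∀ (n : ℕ) (f : ℕ → ℤ × ℤ × ℤ), (∀ k < n, gtE a b (f k) (f (k + 1))) →
      Relation.ReflTransGen r (f 0) (f n) := by
  intro n
  induction n with
  | zero => intro f _; exact Relation.ReflTransGen.refl
  | succ m ih =>
    intro f hf
    exact Relation.ReflTransGen.tail (ih f fun k hk => hf k (by omega))
      (hr _ _ (hf m (by omega)))

theorem stmt_14 (a b : ℕ) :
    (∀ v ∈ GTM a b, ∃ (n : ℕ) (f : ℕ → ℤ × ℤ × ℤ),
      f 0 = ((a : ℤ), 0, 0) ∧ f n = v ∧ ∀ k < n, gtE a b (f k) (f (k + 1))) ∧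
    (∀ u ∈ GTM a b, ∀ v ∈ GTM a b,
      Relation.ReflTransGen (fun x y => gtE a b x y ∨ gtE a b y x) u v) := by
  constructor
  · exact fun v hv => reach_aux a b v hv
  · intro u hu v hv
    obtain ⟨n, f, hf0, hfn, hf⟩ := reach_aux a b u hu
    obtain ⟨m, g, hg0, hgm, hg⟩ := reach_aux a b v hv
    have h1 : Relation.ReflTransGen (fun x y => gtE a b x y ∨ gtE a b y x)
        ((a : ℤ), 0, 0) u := by
      rw [← hf0, ← hfn]; exact path_rtg a b _ (fun x y h => Or.inl h) n f hf
    have h2 : Relation.ReflTransGen (fun x y => gtE a b x y ∨ gtE a b y x)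
        ((a : ℤ), 0, 0) v := by
      rw [← hg0, ← hgm]; exact path_rtg a b _ (fun x y h => Or.inl h) m g hg
    have hsym : Symmetric (fun x y => gtE a b x y ∨ gtE a b y x) :=
      fun x y h => h.symm
    exact ((@Relation.ReflTransGen.symmetric _ _ ⟨hsym⟩).symm _ _ h1).trans h2
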